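/- Let a : ℝ → ℝ be a C^∞ function with a(s) = 0 for all s ≤ 0 and |a(s)| ≤ K for all s, for some constant K. Then each of the vector fields X̃, Ỹ, Z̃ of the Cairns–Ghys perturbation is complete: for every p₀ ∈ ℝ³ there exists a curve γ : ℝ → ℝ³ with γ(0) = p₀ such that for every t ∈ ℝ, γ has derivative X̃(γ(t)) at t (and likewise for Ỹ and Z̃). -/

import Mathlib

noncomputable section

/-- The linear vector field `X(x,y,z) = (0,z,y)` on `ℝ³`. -/
def Xf (p : Fin 3 → ℝ) : Fin 3 → ℝ := ![0, p 2, p 1]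

/-- The linear vector field `Y(x,y,z) = (z,0,x)` on `ℝ³`. -/
def Yf (p : Fin 3 → ℝ) : Fin 3 → ℝ := ![p 2, 0, p 0]

/-- The linear vector field `Z(x,y,z) = (−y,x,0)` on `ℝ³`. -/
def Zf (p : Fin 3 → ℝ) : Fin 3 → ℝ := ![-p 1, p 0, 0]

/-- The Lie bracket of vector fields: `[V,W](p) = DW(p)(V(p)) − DV(p)(W(p))`. -/
def lieBr (V W : (Fin 3 → ℝ) → (Fin 3 → ℝ)) (p : Fin 3 → ℝ) : Fin 3 → ℝ :=
  fderiv ℝ W p (V p) - fderiv ℝ V p (W p)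

/-- The radial vector field `R(x,y,z) = (x,y,z)`. -/
def Rf (p : Fin 3 → ℝ) : Fin 3 → ℝ := p

/-- The quadratic form `x² + y² − z²`. -/
def Qf (p : Fin 3 → ℝ) : ℝ := (p 0) ^ 2 + (p 1) ^ 2 - (p 2) ^ 2

/-- `A(x,y,z) = a(x²+y²−z²)/(x²+y²)` when `x²+y² ≠ 0`, and `0` when `x²+y² = 0`. -/
def Afun (a : ℝ → ℝ) (p : Fin 3 → ℝ) : ℝ :=
  if (p 0) ^ 2 + (p 1) ^ 2 = 0 then 0 else a (Qf p) / ((p 0) ^ 2 + (p 1) ^ 2)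

/-- `f = x·A`. -/
def ff (a : ℝ → ℝ) (p : Fin 3 → ℝ) : ℝ := p 0 * Afun a p

/-- `g = −y·A`. -/
def gf (a : ℝ → ℝ) (p : Fin 3 → ℝ) : ℝ := -p 1 * Afun a p

/-- The Cairns–Ghys perturbed field `X̃ = X + f·R`. -/
def Xt (a : ℝ → ℝ) (p : Fin 3 → ℝ) : Fin 3 → ℝ := Xf p + ff a p • Rf p

/-- The Cairns–Ghys perturbed field `Ỹ = Y + g·R`. -/
def Yt (a : ℝ → ℝ) (p : Fin 3 → ℝ) : Fin 3 → ℝ := Yf p + gf a p • Rf p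

/-- The Cairns–Ghys perturbed field `Z̃ = Z`. -/
def Zt (p : Fin 3 → ℝ) : Fin 3 → ℝ := Zf p

open Set Metric Real

namespace CGaux

lemma abs_coord_le (p : Fin 3 → ℝ) (i : Fin 3) : |p i| ≤ ‖p‖ := by
  rw [← Real.norm_eq_abs]; exact norm_le_pi_norm p i

variable {E : Type*} [NormedAddCommGroup E] [NormedSpace ℝ E]

/-- Radial retraction onto the closed ball of radius `S`. -/
def ret (S : ℝ) (p : E) : E := if ‖p‖ ≤ S then p else (S * ‖p‖⁻¹) • p

lemma ret_eq_self {S : ℝ} {p : E} (h : ‖p‖ ≤ S) : ret S p = p := if_pos h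

lemma norm_ret_le {S : ℝ} (hS : 0 ≤ S) (p : E) : ‖ret S p‖ ≤ S := by
  unfold ret; split_ifs with h
  · exact h
  · push_neg at h
    have hp : 0 < ‖p‖ := lt_of_le_of_lt hS h
    rw [norm_smul, Real.norm_eq_abs, abs_of_nonneg (by positivity)]
    field_simp
    exact le_rfl

lemma norm_ret_le_self {S : ℝ} (hS : 0 ≤ S) (p : E) : ‖ret S p‖ ≤ ‖p‖ := by
  unfold ret; split_ifs with h
  · exact le_refl _
  · push_neg at h
    have hp : 0 < ‖p‖ := lt_of_le_of_lt hS h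
    rw [norm_smul, Real.norm_eq_abs, abs_of_nonneg (by positivity)]
    have : S * ‖p‖⁻¹ * ‖p‖ = S := by field_simp
    rw [this]; exact le_of_lt h

private lemma ret_lip_out {S : ℝ} (hS : 0 ≤ S) {p q : E} (hp : S < ‖p‖) (hq : S < ‖q‖)
    (hpq : ‖q‖ ≤ ‖p‖) : ‖ret S p - ret S q‖ ≤ 2 * ‖p - q‖ := by
  have hp0 : 0 < ‖p‖ := lt_of_le_of_lt hS hp
  have hq0 : 0 < ‖q‖ := lt_of_le_of_lt hS hq
  have h1 : ret S p = (S * ‖p‖⁻¹) • p := if_neg (not_le.mpr hp)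
  have h2 : ret S q = (S * ‖q‖⁻¹) • q := if_neg (not_le.mpr hq)
  rw [h1, h2]
  have key : (S * ‖p‖⁻¹) • p - (S * ‖q‖⁻¹) • q
      = (S * ‖p‖⁻¹) • (p - q) + ((S * ‖p‖⁻¹) - (S * ‖q‖⁻¹)) • q := by
    rw [smul_sub, sub_smul]; abel
  rw [key]
  have e1 : ‖(S * ‖p‖⁻¹) • (p - q)‖ ≤ 1 * ‖p - q‖ := by
    rw [norm_smul, Real.norm_eq_abs, abs_of_nonneg (by positivity)]
    have : S * ‖p‖⁻¹ ≤ 1 := by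
      rw [mul_inv_le_iff₀ hp0, one_mul]; exact le_of_lt hp
    exact mul_le_mul_of_nonneg_right this (norm_nonneg _)
  have e2 : ‖((S * ‖p‖⁻¹) - (S * ‖q‖⁻¹)) • q‖ ≤ ‖p - q‖ := by
    rw [norm_smul, Real.norm_eq_abs]
    have hd : |(S * ‖p‖⁻¹) - (S * ‖q‖⁻¹)| = S * (‖q‖⁻¹ - ‖p‖⁻¹) := by
      rw [abs_of_nonpos]
      · ring
      · have : ‖p‖⁻¹ ≤ ‖q‖⁻¹ := by
          apply inv_anti₀ hq0 hpq
        nlinarith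
    rw [hd]
    have hinv : ‖q‖⁻¹ - ‖p‖⁻¹ = (‖p‖ - ‖q‖) / (‖p‖ * ‖q‖) := by
      rw [inv_eq_one_div, inv_eq_one_div, div_sub_div _ _ hq0.ne' hp0.ne', one_mul, mul_one,
        mul_comm ‖q‖ ‖p‖]
    rw [hinv]
    have hb : S * ((‖p‖ - ‖q‖) / (‖p‖ * ‖q‖)) * ‖q‖ = S / ‖p‖ * (‖p‖ - ‖q‖) := by
      field_simp
    rw [hb]
    have h3 : S / ‖p‖ ≤ 1 := by
      rw [div_le_one hp0]; exact le_of_lt hp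
    have h4 : ‖p‖ - ‖q‖ ≤ ‖p - q‖ := by
      have := norm_sub_norm_le p q; linarith
    have h5 : 0 ≤ ‖p‖ - ‖q‖ := by linarith
    calc S / ‖p‖ * (‖p‖ - ‖q‖) ≤ 1 * (‖p‖ - ‖q‖) := by
          exact mul_le_mul_of_nonneg_right h3 h5
      _ ≤ ‖p - q‖ := by linarith
  calc ‖(S * ‖p‖⁻¹) • (p - q) + ((S * ‖p‖⁻¹) - (S * ‖q‖⁻¹)) • q‖
      ≤ ‖(S * ‖p‖⁻¹) • (p - q)‖ + ‖((S * ‖p‖⁻¹) - (S * ‖q‖⁻¹)) • q‖ := norm_add_le _ _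
    _ ≤ 1 * ‖p - q‖ + ‖p - q‖ := add_le_add e1 e2
    _ = 2 * ‖p - q‖ := by ring

private lemma ret_lip_mixed {S : ℝ} (hS : 0 ≤ S) {p q : E} (hp : ‖p‖ ≤ S) (hq : S < ‖q‖) :
    ‖ret S p - ret S q‖ ≤ 2 * ‖p - q‖ := by
  have hq0 : 0 < ‖q‖ := lt_of_le_of_lt hS hq
  rw [ret_eq_self hp, show ret S q = (S * ‖q‖⁻¹) • q from if_neg (not_le.mpr hq)]
  have key : p - (S * ‖q‖⁻¹) • q = (p - q) + (1 - S * ‖q‖⁻¹) • q := by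
    rw [sub_smul, one_smul]; abel
  rw [key]
  have e2 : ‖(1 - S * ‖q‖⁻¹) • q‖ ≤ ‖p - q‖ := by
    rw [norm_smul, Real.norm_eq_abs]
    have h0 : S * ‖q‖⁻¹ ≤ 1 := by
      rw [mul_inv_le_iff₀ hq0, one_mul]; exact le_of_lt hq
    rw [abs_of_nonneg (by linarith)]
    have : (1 - S * ‖q‖⁻¹) * ‖q‖ = ‖q‖ - S := by field_simp
    rw [this]
    have h4 : ‖q‖ - ‖p‖ ≤ ‖p - q‖ := by
      have := norm_sub_norm_le q p; rw [norm_sub_rev] at this; linarith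
    linarith
  calc ‖(p - q) + (1 - S * ‖q‖⁻¹) • q‖ ≤ ‖p - q‖ + ‖(1 - S * ‖q‖⁻¹) • q‖ := norm_add_le _ _
    _ ≤ 2 * ‖p - q‖ := by linarith

lemma ret_lip {S : ℝ} (hS : 0 ≤ S) (p q : E) : ‖ret S p - ret S q‖ ≤ 2 * ‖p - q‖ := by
  rcases le_or_gt ‖p‖ S with hp | hp <;> rcases le_or_gt ‖q‖ S with hq | hq
  · rw [ret_eq_self hp, ret_eq_self hq]
    have := norm_nonneg (p - q); linarith
  · exact ret_lip_mixed hS hp hq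
  · rw [norm_sub_rev, show ‖p - q‖ = ‖q - p‖ from (norm_sub_rev p q)]
    exact ret_lip_mixed hS hq hp
  · rcases le_total ‖q‖ ‖p‖ with h | h
    · exact ret_lip_out hS hp hq h
    · rw [norm_sub_rev, show ‖p - q‖ = ‖q - p‖ from (norm_sub_rev p q)]
      exact ret_lip_out hS hq hp h

variable [CompleteSpace E]

theorem global_flow (V : E → E)
    (hlip : ∀ R : ℝ, ∃ L : ℝ, 0 ≤ L ∧ ∀ p q : E, ‖p‖ ≤ R → ‖q‖ ≤ R → ‖V p - V q‖ ≤ L * ‖p - q‖)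
    (C : ℝ) (hC : 1 ≤ C) (hgrow : ∀ p : E, ‖V p‖ ≤ C * (1 + ‖p‖)) (p₀ : E) :
    ∃ γ : ℝ → E, γ 0 = p₀ ∧ ∀ t : ℝ, HasDerivAt γ (V (γ t)) t := by
  have hC0 : 0 < C := lt_of_lt_of_le one_pos hC
  set Sb : ℕ → ℝ := fun n => (1 + ‖p₀‖) * Real.exp (C * ((n : ℝ) + 1)) with hSb
  have hSb_pos : ∀ n, 1 ≤ Sb n := by
    intro n
    have h1 : (1:ℝ) ≤ 1 + ‖p₀‖ := by have := norm_nonneg p₀; linarith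
    have h2 : (1:ℝ) ≤ Real.exp (C * ((n:ℝ)+1)) := Real.one_le_exp (by positivity)
    simp only [hSb]; nlinarith
  have hSb_mono : ∀ m n : ℕ, m ≤ n → Sb m ≤ Sb n := by
    intro m n hmn
    have h3 : Real.exp (C * ((m:ℝ)+1)) ≤ Real.exp (C * ((n:ℝ)+1)) := by
      apply Real.exp_le_exp.mpr
      have : (m:ℝ) ≤ (n:ℝ) := Nat.cast_le.mpr hmn
      nlinarith
    have h1 : (0:ℝ) ≤ 1 + ‖p₀‖ := by positivity
    exact mul_le_mul_of_nonneg_left h3 h1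
  have main : ∀ n : ℕ, ∃ α : ℝ → E, α 0 = p₀ ∧ ∀ t ∈ Ioo (-((n:ℝ)+1)) ((n:ℝ)+1),
      HasDerivAt α (V (α t)) t ∧ ‖α t‖ ≤ Sb n := by
    intro n
    set T : ℝ := (n:ℝ) + 1 with hT
    have hT0 : 0 < T := by positivity
    set S : ℝ := Sb n with hS
    have hS1 : 1 ≤ S := hSb_pos n
    have hS0 : 0 ≤ S := by linarith
    obtain ⟨L, hL0, hLip⟩ := hlip S
    set W : E → E := fun p => V (ret S p) with hW
    have hWlip : ∀ p q : E, ‖W p - W q‖ ≤ (2 * L) * ‖p - q‖ := by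
      intro p q
      calc ‖V (ret S p) - V (ret S q)‖ ≤ L * ‖ret S p - ret S q‖ :=
            hLip _ _ (norm_ret_le hS0 p) (norm_ret_le hS0 q)
        _ ≤ L * (2 * ‖p - q‖) := mul_le_mul_of_nonneg_left (ret_lip hS0 p q) hL0
        _ = (2 * L) * ‖p - q‖ := by ring
    set Cb : ℝ := C * (1 + S) with hCb
    have hCb0 : 0 < Cb := by
      have : (0:ℝ) < 1 + S := by linarith
      exact mul_pos hC0 this
    have hWb : ∀ p : E, ‖W p‖ ≤ Cb := by
      intro p
      calc ‖V (ret S p)‖ ≤ C * (1 + ‖ret S p‖) := hgrow _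
        _ ≤ C * (1 + S) := by nlinarith [norm_ret_le hS0 p]
    have hPL : IsPicardLindelof (fun _ x => W x) (tmin := -T) (tmax := T)
        ⟨0, by constructor <;> linarith⟩ p₀
        (Real.toNNReal (Cb * T)) 0 (Real.toNNReal Cb) (Real.toNNReal (2*L)) :=
      { lipschitzOnWith := fun t _ =>
          LipschitzOnWith.of_dist_le' (f := W) (K := 2*L)
            (fun p _ q _ => by rw [dist_eq_norm, dist_eq_norm]; exact hWlip p q)
        continuousOn := fun x _ => continuousOn_const
        norm_le := fun t _ x _ => by rw [Real.coe_toNNReal _ hCb0.le]; exact hWb x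
        mul_max_le := by
          simp only [NNReal.coe_zero, sub_zero, zero_sub, neg_neg, max_self, tsub_zero,
            Real.coe_toNNReal _ hCb0.le, Real.coe_toNNReal _ (le_of_lt (mul_pos hCb0 hT0))]
          exact le_rfl }
    obtain ⟨α, hα0, hαd⟩ := hPL.exists_eq_forall_mem_Icc_hasDerivWithinAt₀
    have hα0 : α 0 = p₀ := hα0
    have hαc : ContinuousOn α (Icc (-T) T) := fun t ht => (hαd t ht).continuousWithinAt
    have gb_le : ∀ x : ℝ, 0 ≤ x → x ≤ T → gronwallBound ‖p₀‖ C C x ≤ S := by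
      intro x hx0 hxT
      have hne : C ≠ 0 := ne_of_gt hC0
      rw [gronwallBound_of_K_ne_0 hne]
      show ‖p₀‖ * Real.exp (C * x) + C / C * (Real.exp (C * x) - 1) ≤ S
      rw [div_self hne]
      have h1 : Real.exp (C * x) ≤ Real.exp (C * T) := by
        apply Real.exp_le_exp.mpr; nlinarith
      have h2 : (0:ℝ) < Real.exp (C * x) := Real.exp_pos _
      have hn : 0 ≤ ‖p₀‖ := norm_nonneg _
      have hSe : S = (1 + ‖p₀‖) * Real.exp (C * T) := rfl
      nlinarith
    have hbndF : ∀ x ∈ Icc (0:ℝ) T, ‖α x‖ ≤ S := by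
      have hf : ContinuousOn α (Icc 0 T) := hαc.mono (Icc_subset_Icc (by linarith) le_rfl)
      have hf' : ∀ x ∈ Ico (0:ℝ) T, HasDerivWithinAt α (W (α x)) (Ici x) x := by
        intro x hx
        have hmem : x ∈ Icc (-T) T := ⟨by linarith [hx.1], le_of_lt hx.2⟩
        exact (hαd x hmem).mono_of_mem_nhdsWithin
          (Icc_mem_nhdsGE_of_mem (⟨by linarith [hx.1], hx.2⟩ : x ∈ Ico (-T) T))
      have bound : ∀ x ∈ Ico (0:ℝ) T, ‖W (α x)‖ ≤ C * ‖α x‖ + C := by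
        intro x _
        calc ‖W (α x)‖ ≤ C * (1 + ‖ret S (α x)‖) := hgrow _
          _ ≤ C * (1 + ‖α x‖) := by nlinarith [norm_ret_le_self hS0 (α x), norm_nonneg (α x)]
          _ = C * ‖α x‖ + C := by ring
      have ha0' : ‖α 0‖ ≤ ‖p₀‖ := by rw [hα0]
      have hgr := norm_le_gronwallBound_of_norm_deriv_right_le hf hf' ha0' bound
      intro x hx
      have h := hgr x hx
      rw [sub_zero] at h
      exact le_trans h (gb_le x hx.1 hx.2)
    have hbndB : ∀ x ∈ Icc (0:ℝ) T, ‖α (-x)‖ ≤ S := by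
      set β : ℝ → E := fun s => α (-s) with hβ
      have hβd : ∀ x ∈ Ico (0:ℝ) T, HasDerivWithinAt β (-(W (β x))) (Ici x) x := by
        intro x hx
        have hmem : -x ∈ Icc (-T) T := ⟨by linarith [hx.1, hx.2], by linarith [hx.1]⟩
        have hneg : HasDerivWithinAt (fun s : ℝ => -s) (-1 : ℝ) (Icc (-T) T) x :=
          (hasDerivAt_neg x).hasDerivWithinAt
        have hmaps : MapsTo (fun s : ℝ => -s) (Icc (-T) T) (Icc (-T) T) := by
          intro s hs
          simp only [mem_Icc] at *
          constructor <;> linarith [hs.1, hs.2]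
        have hcomp := (hαd (-x) hmem).scomp x hneg hmaps
        have hd2 : HasDerivWithinAt β (-(W (β x))) (Icc (-T) T) x := by
          have : (-1 : ℝ) • W (α (-x)) = -(W (β x)) := by
            rw [neg_one_smul]
          rw [← this]
          exact hcomp
        exact hd2.mono_of_mem_nhdsWithin
          (Icc_mem_nhdsGE_of_mem (⟨by linarith [hx.1], hx.2⟩ : x ∈ Ico (-T) T))
      have hβc : ContinuousOn β (Icc 0 T) := by
        apply hαc.comp continuous_neg.continuousOn
        intro s hs
        simp only [mem_Icc] at *
        constructor <;> linarith [hs.1, hs.2]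
      have bound : ∀ x ∈ Ico (0:ℝ) T, ‖-(W (β x))‖ ≤ C * ‖β x‖ + C := by
        intro x _
        rw [norm_neg]
        calc ‖W (β x)‖ ≤ C * (1 + ‖ret S (β x)‖) := hgrow _
          _ ≤ C * (1 + ‖β x‖) := by nlinarith [norm_ret_le_self hS0 (β x), norm_nonneg (β x)]
          _ = C * ‖β x‖ + C := by ring
      have hβ0 : ‖β 0‖ ≤ ‖p₀‖ := by
        show ‖α (-0)‖ ≤ ‖p₀‖
        rw [neg_zero, hα0]
      have hgr := norm_le_gronwallBound_of_norm_deriv_right_le hβc hβd hβ0 bound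
      intro x hx
      have h := hgr x hx
      rw [sub_zero] at h
      exact le_trans h (gb_le x hx.1 hx.2)
    have hbnd : ∀ t ∈ Icc (-T) T, ‖α t‖ ≤ S := by
      intro t ht
      rcases le_total 0 t with h | h
      · exact hbndF t ⟨h, ht.2⟩
      · have hh := hbndB (-t) ⟨by linarith, by linarith [ht.1]⟩
        rwa [neg_neg] at hh
    refine ⟨α, hα0, fun t ht => ?_⟩
    have htIcc : t ∈ Icc (-T) T := Ioo_subset_Icc_self ht
    have hd : HasDerivAt α (W (α t)) t :=
      (hαd t htIcc).hasDerivAt (Icc_mem_nhds ht.1 ht.2)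
    have hWV : W (α t) = V (α t) := by
      show V (ret S (α t)) = V (α t)
      rw [ret_eq_self (hbnd t htIcc)]
    rw [hWV] at hd
    exact ⟨hd, hbnd t htIcc⟩
  choose g hg0 hgd using main
  have hagree : ∀ m n : ℕ, m ≤ n → ∀ t ∈ Ioo (-((m:ℝ)+1)) ((m:ℝ)+1), g m t = g n t := by
    intro m n hmn
    obtain ⟨L, hL0, hLip⟩ := hlip (Sb n)
    have hVlip : ∀ s : ℝ, LipschitzOnWith (Real.toNNReal L) V (closedBall (0:E) (Sb n)) := by
      intro s
      apply LipschitzOnWith.of_dist_le'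
      intro p hp q hq
      rw [dist_eq_norm, dist_eq_norm]
      exact hLip p q (by rwa [mem_closedBall_zero_iff] at hp)
        (by rwa [mem_closedBall_zero_iff] at hq)
    have hmn' : (m:ℝ) ≤ (n:ℝ) := Nat.cast_le.mpr hmn
    have hsub : Ioo (-((m:ℝ)+1)) ((m:ℝ)+1) ⊆ Ioo (-((n:ℝ)+1)) ((n:ℝ)+1) :=
      Ioo_subset_Ioo (by linarith) (by linarith)
    have hm0 : (0:ℝ) ≤ (m:ℝ) := Nat.cast_nonneg m
    have h0m : (0:ℝ) ∈ Ioo (-((m:ℝ)+1)) ((m:ℝ)+1) := ⟨by linarith, by linarith⟩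
    have huniq := ODE_solution_unique_of_mem_Ioo (v := fun _ x => V x)
      (s := fun _ => closedBall (0:E) (Sb n)) (K := Real.toNNReal L)
      (f := g m) (g := g n) (t₀ := 0) (a := -((m:ℝ)+1)) (b := (m:ℝ)+1)
      (fun _ _ => hVlip 0) h0m
      (fun t ht => ⟨(hgd m t ht).1, by
        rw [mem_closedBall_zero_iff]
        exact le_trans (hgd m t ht).2 (hSb_mono m n hmn)⟩)
      (fun t ht => ⟨(hgd n t (hsub ht)).1, by
        rw [mem_closedBall_zero_iff]; exact (hgd n t (hsub ht)).2⟩)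
      (by rw [hg0 m, hg0 n])
    exact fun t ht => huniq ht
  set γ : ℝ → E := fun t => g (Nat.ceil |t|) t with hγ
  have key : ∀ (t : ℝ) (n : ℕ), |t| < (n:ℝ) + 1 → γ t = g n t := by
    intro t n hn
    set m := Nat.ceil |t| with hm
    have hm1 : |t| < (m:ℝ) + 1 := by
      have := Nat.le_ceil |t|
      rw [← hm] at this
      linarith
    have htm : t ∈ Ioo (-((m:ℝ)+1)) ((m:ℝ)+1) := by
      have h := abs_lt.mp hm1
      exact ⟨h.1, h.2⟩
    have htn : t ∈ Ioo (-((n:ℝ)+1)) ((n:ℝ)+1) := by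
      have h := abs_lt.mp hn
      exact ⟨h.1, h.2⟩
    rcases le_total m n with h | h
    · exact hagree m n h t htm
    · exact (hagree n m h t htn).symm
  have hγ0 : γ 0 = p₀ := by
    have h := key 0 0 (by simp)
    rw [h, hg0]
  refine ⟨γ, hγ0, fun t => ?_⟩
  set n : ℕ := Nat.ceil |t| + 1 with hn
  have h1 : |t| < (n:ℝ) := by
    have h2 := Nat.le_ceil |t|
    have h3 : ((Nat.ceil |t| : ℕ) : ℝ) + 1 = (n:ℝ) := by rw [hn]; push_cast; ring
    linarith
  have h2 : |t| < (n:ℝ) + 1 := by linarith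
  have htn : t ∈ Ioo (-((n:ℝ)+1)) ((n:ℝ)+1) := by
    have h := abs_lt.mp h2
    exact ⟨h.1, h.2⟩
  have hev : γ =ᶠ[nhds t] g n := by
    have hopen : IsOpen {s : ℝ | |s| < (n:ℝ)} := by
      have h : {s : ℝ | |s| < (n:ℝ)} = Ioo (-(n:ℝ)) (n:ℝ) := by
        ext s; simp [abs_lt]
      rw [h]; exact isOpen_Ioo
    apply Filter.eventuallyEq_of_mem (hopen.mem_nhds h1)
    intro s hs
    exact key s n (by have : |s| < (n:ℝ) := hs; linarith)
  have hd : HasDerivAt (g n) (V (g n t)) t := (hgd n t htn).1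
  have hfin := hd.congr_of_eventuallyEq hev
  rwa [← key t n h2] at hfin




lemma abs_coord_sub_le (p q : Fin 3 → ℝ) (i : Fin 3) : |p i - q i| ≤ ‖p - q‖ := by
  have := abs_coord_le (p - q) i
  simpa [Pi.sub_apply] using this

lemma deriv_a_nonpos {a : ℝ → ℝ} (ha : ContDiff ℝ (⊤ : ℕ∞) a)
    (ha0 : ∀ s : ℝ, s ≤ 0 → a s = 0) : ∀ s : ℝ, s ≤ 0 → deriv a s = 0 := by
  intro s hs
  rcases lt_or_eq_of_le hs with h | h
  · have hev : a =ᶠ[nhds s] (fun _ => (0:ℝ)) :=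
      Filter.eventually_of_mem (Iio_mem_nhds h) (fun x hx => ha0 x (le_of_lt hx))
    rw [hev.deriv_eq]
    exact deriv_const _ _
  · subst h
    have hd : HasDerivAt a (deriv a 0) 0 :=
      ((ha.differentiable (by simp)) 0).hasDerivAt
    have h1 : HasDerivWithinAt a (deriv a 0) (Iic (0:ℝ)) 0 := hd.hasDerivWithinAt
    have h2 : HasDerivWithinAt a 0 (Iic (0:ℝ)) 0 := by
      apply (hasDerivWithinAt_const (0:ℝ) (Iic (0:ℝ)) (0:ℝ)).congr
      · intro y hy; exact ha0 y hy
      · exact ha0 0 le_rfl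
    have hu : UniqueDiffWithinAt ℝ (Iic (0:ℝ)) 0 := uniqueDiffOn_Iic 0 0 (mem_Iic.mpr le_rfl)
    have e1 := h1.derivWithin hu
    have e2 := h2.derivWithin hu
    rw [← e1, e2]

lemma Afun_eq_integral {a : ℝ → ℝ} (ha : ContDiff ℝ (⊤ : ℕ∞) a)
    (ha0 : ∀ s : ℝ, s ≤ 0 → a s = 0) (p : Fin 3 → ℝ) :
    Afun a p = ∫ t in (0:ℝ)..1, deriv a (t * ((p 0)^2 + (p 1)^2) - (p 2)^2) := by
  have hd0 := deriv_a_nonpos ha ha0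
  by_cases h : (p 0)^2 + (p 1)^2 = 0
  · rw [Afun, if_pos h, h]
    have hz : deriv a (-(p 2)^2) = 0 := hd0 _ (by nlinarith [sq_nonneg (p 2)])
    simp [hz]
  · rw [Afun, if_neg h]
    set u := (p 0)^2 + (p 1)^2 with hu
    have hupos : 0 < u := lt_of_le_of_ne (by positivity) (Ne.symm h)
    set z2 := (p 2)^2 with hz
    have hdiff : Differentiable ℝ a := ha.differentiable (by simp)
    have hderiv : ∀ t ∈ uIcc (0:ℝ) 1,
        HasDerivAt (fun t => a (t * u - z2)) (u * deriv a (t * u - z2)) t := by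
      intro t _
      have h1 : HasDerivAt (fun t : ℝ => t * u - z2) u t := by
        simpa using ((hasDerivAt_id t).mul_const u).sub_const z2
      have h2 : HasDerivAt a (deriv a (t * u - z2)) (t * u - z2) := (hdiff _).hasDerivAt
      have h3 := h2.comp t h1
      rw [mul_comm]; exact h3
    have hcont : Continuous (deriv a) := ((contDiff_infty_iff_deriv.mp ha).2).continuous
    have hint : IntervalIntegrable (fun t => u * deriv a (t * u - z2))
        MeasureTheory.volume 0 1 := by
      apply Continuous.intervalIntegrable
      exact continuous_const.mul (hcont.comp (by continuity))
    have heq := intervalIntegral.integral_eq_sub_of_hasDerivAt hderiv hint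
    rw [intervalIntegral.integral_const_mul] at heq
    simp only [one_mul, zero_mul, zero_sub] at heq
    rw [ha0 (-z2) (by nlinarith [sq_nonneg (p 2)])] at heq
    rw [sub_zero] at heq
    have hQ : Qf p = u - z2 := by rw [Qf]
    have hfinal : (∫ t in (0:ℝ)..1, deriv a (t * u - z2)) = a (u - z2) / u := by
      rw [eq_div_iff (ne_of_gt hupos)]
      linarith [heq]
    rw [hQ, hfinal]

lemma sq_diff_le {x y R' d : ℝ} (hx : |x| ≤ R') (hy : |y| ≤ R') (hd : |x - y| ≤ d) :
    |x^2 - y^2| ≤ 2 * R' * d := by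
  have h : x^2 - y^2 = (x - y) * (x + y) := by ring
  rw [h, abs_mul]
  have h2 : |x + y| ≤ 2 * R' := by
    calc |x + y| ≤ |x| + |y| := abs_add_le _ _
      _ ≤ 2 * R' := by linarith
  calc |x - y| * |x + y| ≤ d * (2 * R') :=
        mul_le_mul hd h2 (abs_nonneg _) (le_trans (abs_nonneg _) hd)
    _ = 2 * R' * d := by ring

lemma Afun_est {a : ℝ → ℝ} (ha : ContDiff ℝ (⊤ : ℕ∞) a)
    (ha0 : ∀ s : ℝ, s ≤ 0 → a s = 0) (R : ℝ) :
    ∃ L : ℝ, 0 ≤ L ∧ (∀ p : Fin 3 → ℝ, ‖p‖ ≤ R → |Afun a p| ≤ L) ∧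
      (∀ p q : Fin 3 → ℝ, ‖p‖ ≤ R → ‖q‖ ≤ R → |Afun a p - Afun a q| ≤ L * ‖p - q‖) := by
  set R' := max R 0 with hR'
  have hR0 : 0 ≤ R' := le_max_right _ _
  have hRR : R ≤ R' := le_max_left _ _
  have hda : ContDiff ℝ (⊤ : ℕ∞) (deriv a) := (contDiff_infty_iff_deriv.mp ha).2
  have hcont1 : Continuous (deriv a) := hda.continuous
  have hdiff1 : Differentiable ℝ (deriv a) := hda.differentiable (by simp)
  have hcont2 : Continuous (deriv (deriv a)) := ((contDiff_infty_iff_deriv.mp hda).2).continuous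
  obtain ⟨M₁, hM₁⟩ := (isCompact_Icc (a := -(2*R'^2)) (b := 2*R'^2)).exists_bound_of_continuousOn
    hcont1.continuousOn
  obtain ⟨M₂, hM₂⟩ := (isCompact_Icc (a := -(2*R'^2)) (b := 2*R'^2)).exists_bound_of_continuousOn
    hcont2.continuousOn
  set M₁' := max M₁ 0 with hM₁'
  set M₂' := max M₂ 0 with hM₂'
  have hM₁'0 : 0 ≤ M₁' := le_max_right _ _
  have hM₂'0 : 0 ≤ M₂' := le_max_right _ _
  have hlipa' : ∀ x ∈ Icc (-(2*R'^2)) (2*R'^2), ∀ y ∈ Icc (-(2*R'^2)) (2*R'^2),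
      |deriv a y - deriv a x| ≤ M₂' * |y - x| := by
    intro x hx y hy
    have h := Convex.norm_image_sub_le_of_norm_deriv_le (f := deriv a) (C := M₂')
      (fun z _ => hdiff1 z)
      (fun z hz => le_trans (hM₂ z hz) (le_max_left _ _)) (convex_Icc _ _) hx hy
    simpa [Real.norm_eq_abs] using h
  have harg : ∀ (p : Fin 3 → ℝ) (t : ℝ), ‖p‖ ≤ R → 0 ≤ t → t ≤ 1 →
      t * ((p 0)^2 + (p 1)^2) - (p 2)^2 ∈ Icc (-(2*R'^2)) (2*R'^2) := by
    intro p t hp ht0 ht1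
    have h0 : |p 0| ≤ R' := le_trans (le_trans (abs_coord_le p 0) hp) hRR
    have h1 : |p 1| ≤ R' := le_trans (le_trans (abs_coord_le p 1) hp) hRR
    have h2 : |p 2| ≤ R' := le_trans (le_trans (abs_coord_le p 2) hp) hRR
    have s0 : (p 0)^2 ≤ R'^2 := by nlinarith [sq_abs (p 0), abs_nonneg (p 0)]
    have s1 : (p 1)^2 ≤ R'^2 := by nlinarith [sq_abs (p 1), abs_nonneg (p 1)]
    have s2 : (p 2)^2 ≤ R'^2 := by nlinarith [sq_abs (p 2), abs_nonneg (p 2)]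
    have hu0 : 0 ≤ (p 0)^2 + (p 1)^2 := by positivity
    have htu0 : 0 ≤ t * ((p 0)^2 + (p 1)^2) := mul_nonneg ht0 hu0
    have htu1 : t * ((p 0)^2 + (p 1)^2) ≤ (p 0)^2 + (p 1)^2 := by nlinarith
    rw [mem_Icc]
    constructor
    · nlinarith [sq_nonneg R', sq_nonneg (p 0), sq_nonneg (p 1)]
    · nlinarith [sq_nonneg R']
  refine ⟨M₁' + M₂' * (6 * R') + 1, by positivity, ?_, ?_⟩
  · intro p hp
    rw [Afun_eq_integral ha ha0 p]
    have hb : ∀ t ∈ Set.uIoc (0:ℝ) 1, ‖deriv a (t * ((p 0)^2 + (p 1)^2) - (p 2)^2)‖ ≤ M₁' := by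
      intro t ht
      have ht' : t ∈ Ioc (0:ℝ) 1 := by rwa [uIoc_of_le (by norm_num : (0:ℝ) ≤ 1)] at ht
      exact le_trans (hM₁ _ (harg p t hp (le_of_lt ht'.1) ht'.2)) (le_max_left _ _)
    have h := intervalIntegral.norm_integral_le_of_norm_le_const hb
    rw [Real.norm_eq_abs] at h
    simp only [sub_zero, abs_one, mul_one] at h
    nlinarith [mul_nonneg hM₂'0 (by linarith : (0:ℝ) ≤ 6 * R')]
  · intro p q hp hq
    rw [Afun_eq_integral ha ha0 p, Afun_eq_integral ha ha0 q]
    have hintp : IntervalIntegrable (fun t => deriv a (t * ((p 0)^2 + (p 1)^2) - (p 2)^2))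
        MeasureTheory.volume 0 1 :=
      Continuous.intervalIntegrable (hcont1.comp (by fun_prop)) _ _
    have hintq : IntervalIntegrable (fun t => deriv a (t * ((q 0)^2 + (q 1)^2) - (q 2)^2))
        MeasureTheory.volume 0 1 :=
      Continuous.intervalIntegrable (hcont1.comp (by fun_prop)) _ _
    rw [← intervalIntegral.integral_sub hintp hintq]
    have hb : ∀ t ∈ Set.uIoc (0:ℝ) 1,
        ‖deriv a (t * ((p 0)^2 + (p 1)^2) - (p 2)^2)
          - deriv a (t * ((q 0)^2 + (q 1)^2) - (q 2)^2)‖ ≤ M₂' * (6 * R') * ‖p - q‖ := by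
      intro t ht
      have ht' : t ∈ Ioc (0:ℝ) 1 := by rwa [uIoc_of_le (by norm_num : (0:ℝ) ≤ 1)] at ht
      have ht0 : 0 ≤ t := le_of_lt ht'.1
      have ht1 : t ≤ 1 := ht'.2
      have hmp := harg p t hp ht0 ht1
      have hmq := harg q t hq ht0 ht1
      have hl := hlipa' _ hmq _ hmp
      rw [Real.norm_eq_abs]
      refine le_trans hl ?_
      have hd0 : ∀ i : Fin 3, |p i| ≤ R' := fun i => le_trans (le_trans (abs_coord_le p i) hp) hRR
      have hd0q : ∀ i : Fin 3, |q i| ≤ R' := fun i => le_trans (le_trans (abs_coord_le q i) hq) hRR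
      have e0 : |(p 0)^2 - (q 0)^2| ≤ 2 * R' * ‖p - q‖ :=
        sq_diff_le (hd0 0) (hd0q 0) (abs_coord_sub_le p q 0)
      have e1 : |(p 1)^2 - (q 1)^2| ≤ 2 * R' * ‖p - q‖ :=
        sq_diff_le (hd0 1) (hd0q 1) (abs_coord_sub_le p q 1)
      have e2 : |(p 2)^2 - (q 2)^2| ≤ 2 * R' * ‖p - q‖ :=
        sq_diff_le (hd0 2) (hd0q 2) (abs_coord_sub_le p q 2)
      have key : |(t * ((p 0)^2 + (p 1)^2) - (p 2)^2) - (t * ((q 0)^2 + (q 1)^2) - (q 2)^2)|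
          ≤ 6 * R' * ‖p - q‖ := by
        have hrw : (t * ((p 0)^2 + (p 1)^2) - (p 2)^2) - (t * ((q 0)^2 + (q 1)^2) - (q 2)^2)
            = t * (((p 0)^2 - (q 0)^2) + ((p 1)^2 - (q 1)^2)) - ((p 2)^2 - (q 2)^2) := by ring
        rw [hrw]
        have h1 : |t * (((p 0)^2 - (q 0)^2) + ((p 1)^2 - (q 1)^2))|
            ≤ |((p 0)^2 - (q 0)^2) + ((p 1)^2 - (q 1)^2)| := by
          rw [abs_mul]
          have := abs_nonneg (((p 0)^2 - (q 0)^2) + ((p 1)^2 - (q 1)^2))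
          nlinarith [abs_of_nonneg ht0]
        have h2 : |((p 0)^2 - (q 0)^2) + ((p 1)^2 - (q 1)^2)|
            ≤ |(p 0)^2 - (q 0)^2| + |(p 1)^2 - (q 1)^2| := abs_add_le _ _
        calc |t * (((p 0)^2 - (q 0)^2) + ((p 1)^2 - (q 1)^2)) - ((p 2)^2 - (q 2)^2)|
            ≤ |t * (((p 0)^2 - (q 0)^2) + ((p 1)^2 - (q 1)^2))| + |(p 2)^2 - (q 2)^2| :=
              abs_sub _ _
          _ ≤ 6 * R' * ‖p - q‖ := by linarith
      calc M₂' * |(t * ((p 0)^2 + (p 1)^2) - (p 2)^2) - (t * ((q 0)^2 + (q 1)^2) - (q 2)^2)|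
          ≤ M₂' * (6 * R' * ‖p - q‖) := mul_le_mul_of_nonneg_left key hM₂'0
        _ = M₂' * (6 * R') * ‖p - q‖ := by ring
    have h := intervalIntegral.norm_integral_le_of_norm_le_const hb
    rw [Real.norm_eq_abs] at h
    simp only [sub_zero, abs_one, mul_one] at h
    have hnn : 0 ≤ ‖p - q‖ := norm_nonneg _
    nlinarith [hM₁'0]

lemma fg_glob {a : ℝ → ℝ} (ha : ContDiff ℝ (⊤ : ℕ∞) a)
    (ha0 : ∀ s : ℝ, s ≤ 0 → a s = 0) (K : ℝ) (haK : ∀ s : ℝ, |a s| ≤ K) :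
    ∃ M : ℝ, 0 ≤ M ∧ ∀ p : Fin 3 → ℝ,
      |p 0| * |Afun a p| ≤ M ∧ |p 1| * |Afun a p| ≤ M := by
  have hK0 : 0 ≤ K := le_trans (abs_nonneg _) (haK 0)
  have hcont1 : Continuous (deriv a) := ((contDiff_infty_iff_deriv.mp ha).2).continuous
  obtain ⟨L₁, hL₁⟩ := (isCompact_Icc (a := (0:ℝ)) (b := 1)).exists_bound_of_continuousOn
    hcont1.continuousOn
  set L := max L₁ 0 with hL
  have hL0 : 0 ≤ L := le_max_right _ _
  refine ⟨max L K, le_trans hL0 (le_max_left _ _), fun p => ?_⟩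
  have hu0 : (0:ℝ) ≤ (p 0)^2 + (p 1)^2 := by positivity
  rcases le_or_gt ((p 0)^2 + (p 1)^2) 1 with hu | hu
  · have hA : |Afun a p| ≤ L := by
      rw [Afun_eq_integral ha ha0 p]
      have hb : ∀ t ∈ Set.uIoc (0:ℝ) 1, ‖deriv a (t * ((p 0)^2 + (p 1)^2) - (p 2)^2)‖ ≤ L := by
        intro t ht
        have ht' : t ∈ Ioc (0:ℝ) 1 := by rwa [uIoc_of_le (by norm_num : (0:ℝ) ≤ 1)] at ht
        rw [Real.norm_eq_abs]
        set s := t * ((p 0)^2 + (p 1)^2) - (p 2)^2 with hs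
        rcases le_or_gt s 0 with hsle | hsgt
        · rw [deriv_a_nonpos ha ha0 s hsle]
          simpa using hL0
        · have hs1 : s ≤ 1 := by
            have := ht'.2
            have := le_of_lt ht'.1
            nlinarith [sq_nonneg (p 2)]
          exact le_trans (hL₁ s ⟨le_of_lt hsgt, hs1⟩) (le_max_left _ _)
      have h := intervalIntegral.norm_integral_le_of_norm_le_const hb
      rw [Real.norm_eq_abs] at h
      simpa using h
    have h0 : |p 0| ≤ 1 := by nlinarith [sq_abs (p 0), abs_nonneg (p 0), sq_nonneg (p 1)]
    have h1 : |p 1| ≤ 1 := by nlinarith [sq_abs (p 1), abs_nonneg (p 1), sq_nonneg (p 0)]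
    constructor
    · calc |p 0| * |Afun a p| ≤ 1 * L := mul_le_mul h0 hA (abs_nonneg _) zero_le_one
        _ ≤ max L K := by simpa using le_max_left L K
    · calc |p 1| * |Afun a p| ≤ 1 * L := mul_le_mul h1 hA (abs_nonneg _) zero_le_one
        _ ≤ max L K := by simpa using le_max_left L K
  · have hup : (0:ℝ) < (p 0)^2 + (p 1)^2 := lt_trans one_pos hu
    have hne : ¬ ((p 0)^2 + (p 1)^2 = 0) := ne_of_gt hup
    have hAeq : Afun a p = a (Qf p) / ((p 0)^2 + (p 1)^2) := by rw [Afun, if_neg hne]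
    have hA : |Afun a p| ≤ K / ((p 0)^2 + (p 1)^2) := by
      rw [hAeq, abs_div, abs_of_pos hup]
      gcongr
      exact haK _
    have hdiv0 : (0:ℝ) ≤ K / ((p 0)^2 + (p 1)^2) := by positivity
    have key : ∀ i : Fin 3, |p i|^2 ≤ (p 0)^2 + (p 1)^2 → |p i| * |Afun a p| ≤ max L K := by
      intro i hi
      have hpi_le : |p i| ≤ (p 0)^2 + (p 1)^2 := by
        rcases le_or_gt (|p i|) 1 with h | h
        · linarith
        · nlinarith
      calc |p i| * |Afun a p| ≤ |p i| * (K / ((p 0)^2 + (p 1)^2)) :=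
            mul_le_mul_of_nonneg_left hA (abs_nonneg _)
        _ ≤ ((p 0)^2 + (p 1)^2) * (K / ((p 0)^2 + (p 1)^2)) :=
            mul_le_mul_of_nonneg_right hpi_le hdiv0
        _ = K := by field_simp
        _ ≤ max L K := le_max_right _ _
    constructor
    · exact key 0 (by nlinarith [sq_abs (p 0), sq_nonneg (p 1)])
    · exact key 1 (by nlinarith [sq_abs (p 1), sq_nonneg (p 0)])



lemma norm_Xf_le (p : Fin 3 → ℝ) : ‖Xf p‖ ≤ ‖p‖ := by
  apply (pi_norm_le_iff_of_nonneg (norm_nonneg p)).mpr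
  intro i
  fin_cases i
  · simpa [Xf] using norm_nonneg p
  · simpa [Xf] using norm_le_pi_norm p 2
  · simpa [Xf] using norm_le_pi_norm p 1

lemma norm_Yf_le (p : Fin 3 → ℝ) : ‖Yf p‖ ≤ ‖p‖ := by
  apply (pi_norm_le_iff_of_nonneg (norm_nonneg p)).mpr
  intro i
  fin_cases i
  · simpa [Yf] using norm_le_pi_norm p 2
  · simpa [Yf] using norm_nonneg p
  · simpa [Yf] using norm_le_pi_norm p 0

lemma norm_Zf_le (p : Fin 3 → ℝ) : ‖Zf p‖ ≤ ‖p‖ := by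
  apply (pi_norm_le_iff_of_nonneg (norm_nonneg p)).mpr
  intro i
  fin_cases i
  · simpa [Zf] using norm_le_pi_norm p 1
  · simpa [Zf] using norm_le_pi_norm p 0
  · simpa [Zf] using norm_nonneg p

lemma Xf_sub (p q : Fin 3 → ℝ) : Xf p - Xf q = Xf (p - q) := by
  funext i; fin_cases i <;> simp [Xf]

lemma Yf_sub (p q : Fin 3 → ℝ) : Yf p - Yf q = Yf (p - q) := by
  funext i; fin_cases i <;> simp [Yf]

lemma Zf_sub (p q : Fin 3 → ℝ) : Zf p - Zf q = Zf (p - q) := by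
  funext i; fin_cases i <;> simp [Zf] <;> try ring



end CGaux

/-- If `a` is `C^∞`, vanishes on `(−∞,0]` and is bounded, then each Cairns–Ghys
perturbed vector field `X̃, Ỹ, Z̃` is complete: through every point there is a global
integral curve defined on all of `ℝ`. -/
theorem cairnsGhys_fields_complete
    (a : ℝ → ℝ) (ha : ContDiff ℝ (⊤ : ℕ∞) a) (ha0 : ∀ s : ℝ, s ≤ 0 → a s = 0)
    (K : ℝ) (haK : ∀ s : ℝ, |a s| ≤ K) :
    (∀ p₀ : Fin 3 → ℝ, ∃ γ : ℝ → (Fin 3 → ℝ), γ 0 = p₀ ∧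
      ∀ t : ℝ, HasDerivAt γ (Xt a (γ t)) t) ∧
    (∀ p₀ : Fin 3 → ℝ, ∃ γ : ℝ → (Fin 3 → ℝ), γ 0 = p₀ ∧
      ∀ t : ℝ, HasDerivAt γ (Yt a (γ t)) t) ∧
    (∀ p₀ : Fin 3 → ℝ, ∃ γ : ℝ → (Fin 3 → ℝ), γ 0 = p₀ ∧
      ∀ t : ℝ, HasDerivAt γ (Zt (γ t)) t) := by

  obtain ⟨M, hM0, hM⟩ := CGaux.fg_glob ha ha0 K haK
  have habsff : ∀ p : Fin 3 → ℝ, |ff a p| ≤ M := by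
    intro p; rw [ff, abs_mul]; exact (hM p).1
  have habsgf : ∀ p : Fin 3 → ℝ, |gf a p| ≤ M := by
    intro p; rw [gf, abs_mul, abs_neg]; exact (hM p).2
  refine ⟨?_, ?_, ?_⟩
  · -- the field Xt
    intro p₀
    apply CGaux.global_flow (Xt a) ?_ (1 + M) (by linarith) ?_ p₀
    · intro R
      obtain ⟨L, hL0, hLb, hLl⟩ := CGaux.Afun_est ha ha0 R
      refine ⟨1 + M + L * |R| + L * |R|^2, by positivity, ?_⟩
      intro p q hp hq
      have hR0 : (0:ℝ) ≤ R := le_trans (norm_nonneg p) hp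
      have h1 : ‖Xt a p - Xt a q‖ ≤ ‖Xf p - Xf q‖ + ‖ff a p • Rf p - ff a q • Rf q‖ := by
        have e : Xt a p - Xt a q = (Xf p - Xf q) + (ff a p • Rf p - ff a q • Rf q) := by
          simp only [Xt]; abel
        rw [e]; exact norm_add_le _ _
      have h2 : ‖Xf p - Xf q‖ ≤ ‖p - q‖ := by rw [CGaux.Xf_sub]; exact CGaux.norm_Xf_le _
      have h3 : ff a p • Rf p - ff a q • Rf q
          = ff a p • (p - q) + (ff a p - ff a q) • q := by
        simp only [Rf]; rw [smul_sub, sub_smul]; abel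
      have h4 : ‖ff a p • (p - q) + (ff a p - ff a q) • q‖
          ≤ |ff a p| * ‖p - q‖ + |ff a p - ff a q| * ‖q‖ := by
        refine le_trans (norm_add_le _ _) ?_
        rw [norm_smul, norm_smul, Real.norm_eq_abs, Real.norm_eq_abs]
      have h6 : |ff a p - ff a q| ≤ L * ‖p - q‖ + R * (L * ‖p - q‖) := by
        have e : ff a p - ff a q
            = (p 0 - q 0) * Afun a p + q 0 * (Afun a p - Afun a q) := by
          simp only [ff]; ring
        rw [e]
        refine le_trans (abs_add_le _ _) ?_
        rw [abs_mul, abs_mul]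
        have b1 := CGaux.abs_coord_sub_le p q 0
        have b2 := hLb p hp
        have b3 : |q 0| ≤ R := le_trans (CGaux.abs_coord_le q 0) hq
        have b4 := hLl p q hp hq
        have t1 : |p 0 - q 0| * |Afun a p| ≤ L * ‖p - q‖ := by
          calc |p 0 - q 0| * |Afun a p| ≤ ‖p - q‖ * L :=
                mul_le_mul b1 b2 (abs_nonneg _) (norm_nonneg _)
            _ = L * ‖p - q‖ := mul_comm _ _
        have t2 : |q 0| * |Afun a p - Afun a q| ≤ R * (L * ‖p - q‖) :=
          mul_le_mul b3 b4 (abs_nonneg _) hR0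
        linarith
      have h7 : |ff a p - ff a q| * ‖q‖ ≤ (L * ‖p - q‖ + R * (L * ‖p - q‖)) * R := by
        apply mul_le_mul h6 hq (norm_nonneg _)
        have hLpq : (0:ℝ) ≤ L * ‖p - q‖ := mul_nonneg hL0 (norm_nonneg _)
        nlinarith
      have h8 : |ff a p| * ‖p - q‖ ≤ M * ‖p - q‖ :=
        mul_le_mul_of_nonneg_right (habsff p) (norm_nonneg _)
      have h9 : ‖ff a p • Rf p - ff a q • Rf q‖
          ≤ M * ‖p - q‖ + (L * ‖p - q‖ + R * (L * ‖p - q‖)) * R := by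
        rw [h3]
        exact le_trans h4 (by linarith)
      calc ‖Xt a p - Xt a q‖
          ≤ ‖p - q‖ + (M * ‖p - q‖ + (L * ‖p - q‖ + R * (L * ‖p - q‖)) * R) := by
            linarith
        _ = (1 + M + L * R + L * R^2) * ‖p - q‖ := by ring
        _ ≤ (1 + M + L * |R| + L * |R|^2) * ‖p - q‖ := by
            rw [abs_of_nonneg hR0]
    · intro p
      have h1 : ‖Xt a p‖ ≤ ‖Xf p‖ + ‖ff a p • Rf p‖ := by
        simp only [Xt]; exact norm_add_le _ _
      have h2 : ‖ff a p • Rf p‖ = |ff a p| * ‖p‖ := by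
        simp only [Rf]; rw [norm_smul, Real.norm_eq_abs]
      have h3 : |ff a p| * ‖p‖ ≤ M * ‖p‖ :=
        mul_le_mul_of_nonneg_right (habsff p) (norm_nonneg _)
      nlinarith [CGaux.norm_Xf_le p, norm_nonneg p]
  · -- the field Yt
    intro p₀
    apply CGaux.global_flow (Yt a) ?_ (1 + M) (by linarith) ?_ p₀
    · intro R
      obtain ⟨L, hL0, hLb, hLl⟩ := CGaux.Afun_est ha ha0 R
      refine ⟨1 + M + L * |R| + L * |R|^2, by positivity, ?_⟩
      intro p q hp hq
      have hR0 : (0:ℝ) ≤ R := le_trans (norm_nonneg p) hp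
      have h1 : ‖Yt a p - Yt a q‖ ≤ ‖Yf p - Yf q‖ + ‖gf a p • Rf p - gf a q • Rf q‖ := by
        have e : Yt a p - Yt a q = (Yf p - Yf q) + (gf a p • Rf p - gf a q • Rf q) := by
          simp only [Yt]; abel
        rw [e]; exact norm_add_le _ _
      have h2 : ‖Yf p - Yf q‖ ≤ ‖p - q‖ := by rw [CGaux.Yf_sub]; exact CGaux.norm_Yf_le _
      have h3 : gf a p • Rf p - gf a q • Rf q
          = gf a p • (p - q) + (gf a p - gf a q) • q := by
        simp only [Rf]; rw [smul_sub, sub_smul]; abel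
      have h4 : ‖gf a p • (p - q) + (gf a p - gf a q) • q‖
          ≤ |gf a p| * ‖p - q‖ + |gf a p - gf a q| * ‖q‖ := by
        refine le_trans (norm_add_le _ _) ?_
        rw [norm_smul, norm_smul, Real.norm_eq_abs, Real.norm_eq_abs]
      have h6 : |gf a p - gf a q| ≤ L * ‖p - q‖ + R * (L * ‖p - q‖) := by
        have e : gf a p - gf a q
            = (q 1 - p 1) * Afun a p + (-q 1) * (Afun a p - Afun a q) := by
          simp only [gf]; ring
        rw [e]
        refine le_trans (abs_add_le _ _) ?_
        rw [abs_mul, abs_mul, abs_neg]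
        have b1 : |q 1 - p 1| ≤ ‖p - q‖ := by
          rw [abs_sub_comm]; exact CGaux.abs_coord_sub_le p q 1
        have b2 := hLb p hp
        have b3 : |q 1| ≤ R := le_trans (CGaux.abs_coord_le q 1) hq
        have b4 := hLl p q hp hq
        have t1 : |q 1 - p 1| * |Afun a p| ≤ L * ‖p - q‖ := by
          calc |q 1 - p 1| * |Afun a p| ≤ ‖p - q‖ * L :=
                mul_le_mul b1 b2 (abs_nonneg _) (norm_nonneg _)
            _ = L * ‖p - q‖ := mul_comm _ _
        have t2 : |q 1| * |Afun a p - Afun a q| ≤ R * (L * ‖p - q‖) :=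
          mul_le_mul b3 b4 (abs_nonneg _) hR0
        linarith
      have h7 : |gf a p - gf a q| * ‖q‖ ≤ (L * ‖p - q‖ + R * (L * ‖p - q‖)) * R := by
        apply mul_le_mul h6 hq (norm_nonneg _)
        have hLpq : (0:ℝ) ≤ L * ‖p - q‖ := mul_nonneg hL0 (norm_nonneg _)
        nlinarith
      have h8 : |gf a p| * ‖p - q‖ ≤ M * ‖p - q‖ :=
        mul_le_mul_of_nonneg_right (habsgf p) (norm_nonneg _)
      have h9 : ‖gf a p • Rf p - gf a q • Rf q‖
          ≤ M * ‖p - q‖ + (L * ‖p - q‖ + R * (L * ‖p - q‖)) * R := by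
        rw [h3]
        exact le_trans h4 (by linarith)
      calc ‖Yt a p - Yt a q‖
          ≤ ‖p - q‖ + (M * ‖p - q‖ + (L * ‖p - q‖ + R * (L * ‖p - q‖)) * R) := by
            linarith
        _ = (1 + M + L * R + L * R^2) * ‖p - q‖ := by ring
        _ ≤ (1 + M + L * |R| + L * |R|^2) * ‖p - q‖ := by
            rw [abs_of_nonneg hR0]
    · intro p
      have h1 : ‖Yt a p‖ ≤ ‖Yf p‖ + ‖gf a p • Rf p‖ := by
        simp only [Yt]; exact norm_add_le _ _
      have h2 : ‖gf a p • Rf p‖ = |gf a p| * ‖p‖ := by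
        simp only [Rf]; rw [norm_smul, Real.norm_eq_abs]
      have h3 : |gf a p| * ‖p‖ ≤ M * ‖p‖ :=
        mul_le_mul_of_nonneg_right (habsgf p) (norm_nonneg _)
      nlinarith [CGaux.norm_Yf_le p, norm_nonneg p]
  · -- the field Zt
    intro p₀
    apply CGaux.global_flow Zt ?_ 1 le_rfl ?_ p₀
    · intro R
      refine ⟨1, zero_le_one, fun p q hp hq => ?_⟩
      show ‖Zf p - Zf q‖ ≤ 1 * ‖p - q‖
      rw [CGaux.Zf_sub, one_mul]
      exact CGaux.norm_Zf_le _
    · intro p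
      show ‖Zf p‖ ≤ 1 * (1 + ‖p‖)
      have := CGaux.norm_Zf_le p
      have := norm_nonneg p
      linarith
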